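/- For every n ≥ 1 and every ρ ∈ [0,1], the Sequential-flipping + SLN flip probability satisfies s(n) = ((K-1)/K)·(1 - (1 - Kρ/(K-1))^n) ≤ 1 - (1-ρ)^n = r(n), where K ≥ 2. -/
import Mathlib

lemma seq_sln_aux (ρ c a : ℝ) (hρ0 : 0 ≤ ρ) (hρ1 : ρ ≤ 1)
    (hc : 0 ≤ c) (ha1 : -1 ≤ a) (ha2 : a ≤ 1 - ρ) (hca : c * (1 - a) = ρ) :
    ∀ n : ℕ, c * (1 - a ^ n) ≤ 1 - (1 - ρ) ^ n := by
  have habs : |a| ≤ 1 := abs_le.mpr ⟨ha1, le_trans ha2 (by linarith)⟩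
  intro n
  induction n with
  | zero => simp
  | succ n ih =>
    have hs0 : 0 ≤ c * (1 - a ^ n) := by
      have : a ^ n ≤ 1 := by
        calc a ^ n ≤ |a ^ n| := le_abs_self _
        _ = |a| ^ n := by rw [abs_pow]
        _ ≤ 1 := pow_le_one₀ (abs_nonneg a) habs
      nlinarith
    have hr0 : 0 ≤ 1 - (1 - ρ) ^ n := by
      have : (1 - ρ) ^ n ≤ 1 := pow_le_one₀ (by linarith) (by linarith)
      linarith
    have key : c * (1 - a ^ (n + 1)) = ρ + a * (c * (1 - a ^ n)) := by
      ring_nf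
      nlinarith [hca]
    have key2 : 1 - (1 - ρ) ^ (n + 1) = ρ + (1 - ρ) * (1 - (1 - ρ) ^ n) := by
      ring
    rw [key, key2]
    rcases le_or_gt 0 a with h | h
    · have h1 : a * (c * (1 - a ^ n)) ≤ (1 - ρ) * (c * (1 - a ^ n)) :=
        mul_le_mul_of_nonneg_right ha2 hs0
      have h2 : (1 - ρ) * (c * (1 - a ^ n)) ≤ (1 - ρ) * (1 - (1 - ρ) ^ n) :=
        mul_le_mul_of_nonneg_left ih (by linarith)
      linarith
    · have h1 : a * (c * (1 - a ^ n)) ≤ 0 := mul_nonpos_of_nonpos_of_nonneg h.le hs0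
      have h2 : 0 ≤ (1 - ρ) * (1 - (1 - ρ) ^ n) := mul_nonneg (by linarith) hr0
      linarith

theorem seq_sln_le_veto (K : ℕ) (hK : 2 ≤ K) (n : ℕ) (hn : 1 ≤ n)
    (ρ : ℝ) (hρ0 : 0 ≤ ρ) (hρ1 : ρ ≤ 1) :
    ((K : ℝ) - 1) / K * (1 - (1 - K * ρ / ((K : ℝ) - 1)) ^ n) ≤ 1 - (1 - ρ) ^ n := by
  have hK2 : (2 : ℝ) ≤ (K : ℝ) := by exact_mod_cast hK
  have hKpos : (0 : ℝ) < K := by linarith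
  have hKm1 : (0 : ℝ) < (K : ℝ) - 1 := by linarith
  apply seq_sln_aux ρ (((K : ℝ) - 1) / K) (1 - K * ρ / ((K : ℝ) - 1)) hρ0 hρ1
  · positivity
  · rw [neg_le_sub_iff_le_add, div_le_iff₀ hKm1]
    nlinarith
  · rw [sub_le_sub_iff_left, le_div_iff₀ hKm1]
    nlinarith
  · field_simp
    ring
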